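/- Let y : [0,∞) → [0,∞) be absolutely continuous and satisfy ẏ(t) ≤ a(t) + b(t)[y(t) + y(t)^α] for a.e. t > 0, where α ≥ 1 and a, b ∈ L^∞(0,∞). Assume also y ∈ L¹(0,∞), and set 𝖺 := ess sup_{t>0}|a(t)|, 𝖻 := ess sup_{t>0}|b(t)|, and M := 3 max{1, 2𝖺, 2𝖻}. Then there exists δ > 0 such that, if y(0) ≤ δ and ∫₀^∞ y(s) ds ≤ δ², then y(t) < Mδ for all t ∈ (0,∞). -/

import Mathlib

open MeasureTheory Filter Topology Set
open scoped ENNReal Topology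

set_option maxHeartbeats 1000000

noncomputable section

/-- Lemma `gronwa`: let `y : [0,∞) → [0,∞)` be absolutely continuous
(i.e. `y(t) − y(s) = ∫_s^t y'` for a locally integrable `y'`) with
`y'(t) ≤ a(t) + b(t)(y(t) + y(t)^α)` a.e., where `α ≥ 1` and `a, b ∈ L^∞(0,∞)`, and assume
`y ∈ L¹(0,∞)`.  With `𝖺 := ess sup |a|`, `𝖻 := ess sup |b|` and `M := 3 max{1, 2𝖺, 2𝖻}`,
there exists `δ > 0` such that if `y(0) ≤ δ` and `∫₀^∞ y ≤ δ²`, then `y(t) < Mδ` for all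
`t > 0`. -/
theorem statement9 (y y' a b : ℝ → ℝ) (α : ℝ) (hα : 1 ≤ α)
    (hy_nonneg : ∀ t : ℝ, 0 ≤ t → 0 ≤ y t)
    (hy'_loc : LocallyIntegrableOn y' (Set.Ici (0:ℝ)))
    (hFTC : ∀ s t : ℝ, 0 ≤ s → s ≤ t → y t - y s = ∫ τ in s..t, y' τ)
    (ha : MemLp a ∞ (volume.restrict (Set.Ioi (0:ℝ))))
    (hb : MemLp b ∞ (volume.restrict (Set.Ioi (0:ℝ))))
    (hineq : ∀ᵐ t ∂(volume.restrict (Set.Ioi (0:ℝ))), y' t ≤ a t + b t * (y t + y t ^ α))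
    (hyL1 : IntegrableOn y (Set.Ioi (0:ℝ))) :
    ∃ δ > (0:ℝ),
      y 0 ≤ δ → (∫ s in Set.Ioi (0:ℝ), y s) ≤ δ ^ 2 →
      ∀ t > (0:ℝ),
        y t < 3 * max 1 (max (2 * essSup (fun t => |a t|) (volume.restrict (Set.Ioi (0:ℝ))))
          (2 * essSup (fun t => |b t|) (volume.restrict (Set.Ioi (0:ℝ))))) * δ := by
  set μ := volume.restrict (Set.Ioi (0:ℝ)) with hμdef
  set A := essSup (fun t => |a t|) μ with hAdef
  set B := essSup (fun t => |b t|) μ with hBdef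
  set M := 3 * max 1 (max (2 * A) (2 * B)) with hMdef
  -- μ is a nonzero measure
  have hμ0 : μ ≠ 0 := by
    intro h
    have h1 : μ (Set.Ioi (0:ℝ)) = 0 := by rw [h]; simp
    rw [hμdef, Measure.restrict_apply_self] at h1
    simp [Real.volume_Ioi] at h1
  haveI : NeBot (ae μ) := ae_neBot.mpr hμ0
  -- a.e. bounds by the essential suprema
  have hbdd : ∀ (f : ℝ → ℝ), MemLp f ∞ μ →
      IsBoundedUnder (· ≤ ·) (ae μ) fun t => |f t| := by
    intro f hf
    refine ⟨(eLpNormEssSup f μ).toReal, eventually_map.2 ?_⟩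
    have hfin : eLpNormEssSup f μ ≠ ∞ := by
      have h := hf.2
      rw [eLpNorm_exponent_top] at h
      exact h.ne
    filter_upwards [ae_le_eLpNormEssSup (f := f) (μ := μ)] with x hx
    have := ENNReal.toReal_mono hfin hx
    simpa [Real.norm_eq_abs] using this
  have haA : ∀ᵐ t ∂μ, |a t| ≤ A := ae_le_essSup (hbdd a ha)
  have hbB : ∀ᵐ t ∂μ, |b t| ≤ B := ae_le_essSup (hbdd b hb)
  have hA0 : 0 ≤ A := by
    obtain ⟨x, hx⟩ := haA.exists
    exact le_trans (abs_nonneg _) hx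
  have hB0 : 0 ≤ B := by
    obtain ⟨x, hx⟩ := hbB.exists
    exact le_trans (abs_nonneg _) hx
  have hmax1 : (1:ℝ) ≤ max 1 (max (2 * A) (2 * B)) := le_max_left _ _
  have hM3 : (3:ℝ) ≤ M := by rw [hMdef]; linarith
  have hAM : 6 * A ≤ M := by
    have : 2 * A ≤ max 1 (max (2 * A) (2 * B)) :=
      le_trans (le_max_left _ _) (le_max_right _ _)
    rw [hMdef]; linarith
  have hBM : 6 * B ≤ M := by
    have : 2 * B ≤ max 1 (max (2 * A) (2 * B)) :=
      le_trans (le_max_right _ _) (le_max_right _ _)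
    rw [hMdef]; linarith
  have hMpos : (0:ℝ) < M := by linarith
  set δ := 1 / (2 * M) with hδdef
  have hδpos : 0 < δ := by rw [hδdef]; positivity
  have hδ6 : δ ≤ 1 / 6 := by
    rw [hδdef]
    rw [div_le_div_iff₀ (by linarith) (by norm_num)]
    linarith
  refine ⟨δ, hδpos, ?_⟩
  intro hy0 hyint t ht
  have hMδ : M * δ = 1 / 2 := by
    rw [hδdef]; field_simp
  rw [hMδ]
  by_contra hcon
  push_neg at hcon
  -- y is continuous on [0, t]
  have hy'int : IntegrableOn y' (Icc 0 t) volume :=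
    hy'_loc.integrableOn_compact_subset Icc_subset_Ici_self isCompact_Icc
  have hcont : ContinuousOn y (Icc 0 t) := by
    have h1 := intervalIntegral.continuousOn_primitive (f := y') (a := 0) (b := t)
      (μ := volume) hy'int
    have h2' : ContinuousOn (fun x => y 0 + ∫ τ in Ioc 0 x, y' τ ∂volume) (Icc 0 t) :=
      continuousOn_const.add h1
    refine h2'.congr ?_
    intro x hx
    have h2 := hFTC 0 x le_rfl hx.1
    rw [intervalIntegral.integral_of_le hx.1] at h2
    simp only
    linarith
  -- the first time y reaches 1/2
  set S := Icc 0 t ∩ y ⁻¹' Ici (1/2) with hSdef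
  have hSclosed : IsClosed S :=
    hcont.preimage_isClosed_of_isClosed isClosed_Icc isClosed_Ici
  have hSne : S.Nonempty := ⟨t, ⟨le_of_lt ht, le_rfl⟩, hcon⟩
  have hSbdd : BddBelow S := ⟨0, fun x hx => hx.1.1⟩
  set t₀ := sInf S with ht₀def
  have ht₀mem : t₀ ∈ S := hSclosed.csInf_mem hSne hSbdd
  have ht₀0 : 0 ≤ t₀ := ht₀mem.1.1
  have ht₀t : t₀ ≤ t := ht₀mem.1.2
  have hyt₀ : 1/2 ≤ y t₀ := ht₀mem.2
  have hlt : ∀ x, 0 ≤ x → x < t₀ → y x < 1/2 := by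
    intro x hx0 hxt
    by_contra h
    push_neg at h
    have hxS : x ∈ S := ⟨⟨hx0, le_trans hxt.le ht₀t⟩, h⟩
    exact absurd (csInf_le hSbdd hxS) (not_le.mpr hxt)
  -- choose a starting point s close to t₀ with small y s
  have hs : ∃ s, 0 ≤ s ∧ s ≤ t₀ ∧ t₀ - s ≤ δ ∧ y s ≤ 3/2 * δ := by
    by_cases hc : t₀ ≤ δ
    · exact ⟨0, le_rfl, ht₀0, by linarith, by linarith⟩
    · push_neg at hc
      by_contra hno
      push_neg at hno
      have hsub : Ioc (t₀ - δ) t₀ ⊆ Ioi (0:ℝ) := fun x hx => lt_trans (by linarith) hx.1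
      have hInt : IntegrableOn y (Ioc (t₀ - δ) t₀) := hyL1.mono_set hsub
      have hvol : (volume (Ioc (t₀ - δ) t₀)).toReal = δ := by
        rw [Real.volume_Ioc, sub_sub_cancel, ENNReal.toReal_ofReal hδpos.le]
      have h1 : 3/2 * δ * (volume (Ioc (t₀ - δ) t₀)).toReal ≤ ∫ x in Ioc (t₀ - δ) t₀, y x := by
        refine setIntegral_ge_of_const_le_real measurableSet_Ioc ?_ ?_ hInt
        · rw [Real.volume_Ioc]; exact ENNReal.ofReal_ne_top
        · intro x hx
          have hx0 : 0 ≤ x := le_trans (by linarith) hx.1.le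
          exact (hno x hx0 hx.2 (by linarith [hx.1])).le
      have h2 : ∫ x in Ioc (t₀ - δ) t₀, y x ≤ ∫ x in Ioi (0:ℝ), y x := by
        refine setIntegral_mono_set hyL1 ?_ (HasSubset.Subset.eventuallyLE hsub)
        exact (ae_restrict_iff' measurableSet_Ioi).mpr (ae_of_all _ fun x hx => hy_nonneg x hx.le)
      rw [hvol] at h1
      have hδ2 : (3/2 : ℝ) * δ * δ ≤ δ ^ 2 := by linarith
      nlinarith
  obtain ⟨s, hs0, hst₀, hsδ, hys⟩ := hs
  -- the key differential estimate on (s, t₀]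
  have hIocsub : Ioc s t₀ ⊆ Ioi (0:ℝ) := fun x hx => lt_of_le_of_lt hs0 hx.1
  have hy'I : IntegrableOn y' (Ioc s t₀) volume :=
    (hy'_loc.integrableOn_compact_subset
      (fun x (hx : x ∈ Icc s t₀) => le_trans hs0 hx.1) isCompact_Icc).mono_set
      Ioc_subset_Icc_self
  have hne : ∀ᵐ x : ℝ ∂volume, x ≠ t₀ := by
    rw [ae_iff]
    have : {x : ℝ | ¬x ≠ t₀} = {t₀} := by ext x; simp
    rw [this]
    exact measure_singleton t₀
  have hbound : ∀ᵐ x ∂volume.restrict (Ioc s t₀), y' x ≤ A + B := by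
    have h1 : ∀ᵐ x ∂volume.restrict (Ioc s t₀), y' x ≤ a x + b x * (y x + y x ^ α) :=
      ae_restrict_of_ae_restrict_of_subset hIocsub hineq
    have h2 : ∀ᵐ x ∂volume.restrict (Ioc s t₀), |a x| ≤ A :=
      ae_restrict_of_ae_restrict_of_subset hIocsub haA
    have h3 : ∀ᵐ x ∂volume.restrict (Ioc s t₀), |b x| ≤ B :=
      ae_restrict_of_ae_restrict_of_subset hIocsub hbB
    have h4 : ∀ᵐ x ∂volume.restrict (Ioc s t₀), x ∈ Ioc s t₀ := ae_restrict_mem measurableSet_Ioc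
    have h5 : ∀ᵐ x ∂volume.restrict (Ioc s t₀), x ≠ t₀ := ae_restrict_of_ae hne
    filter_upwards [h1, h2, h3, h4, h5] with x hx1 hx2 hx3 hx4 hx5
    have hx0 : 0 ≤ x := le_trans hs0 hx4.1.le
    have hxlt : x < t₀ := lt_of_le_of_ne hx4.2 hx5
    have hyx : y x < 1/2 := hlt x hx0 hxlt
    have hyx0 : 0 ≤ y x := hy_nonneg x hx0
    have hpow : y x ^ α ≤ 1/2 := by
      calc y x ^ α ≤ (1/2 : ℝ) ^ α := Real.rpow_le_rpow hyx0 hyx.le (by linarith)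
        _ ≤ (1/2 : ℝ) ^ (1:ℝ) :=
          Real.rpow_le_rpow_of_exponent_ge (by norm_num) (by norm_num) hα
        _ = 1/2 := by norm_num
    have hpow0 : 0 ≤ y x ^ α := Real.rpow_nonneg hyx0 α
    have hz : 0 ≤ y x + y x ^ α := by linarith
    have hz1 : y x + y x ^ α ≤ 1 := by linarith
    calc y' x ≤ a x + b x * (y x + y x ^ α) := hx1
      _ ≤ |a x| + |b x| * (y x + y x ^ α) := by
          have := le_abs_self (a x)
          have hb' : b x * (y x + y x ^ α) ≤ |b x| * (y x + y x ^ α) :=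
            mul_le_mul_of_nonneg_right (le_abs_self _) hz
          linarith
      _ ≤ A + B * 1 := by
          have : |b x| * (y x + y x ^ α) ≤ B * 1 := by
            calc |b x| * (y x + y x ^ α) ≤ B * (y x + y x ^ α) :=
              mul_le_mul_of_nonneg_right hx3 hz
            _ ≤ B * 1 := mul_le_mul_of_nonneg_left hz1 hB0
          linarith
      _ = A + B := by ring
  have hKint : IntegrableOn (fun _ : ℝ => A + B) (Ioc s t₀) volume := by
    refine integrableOn_const ?_
    rw [Real.volume_Ioc]
    exact ENNReal.ofReal_ne_top
  have hintle : ∫ x in Ioc s t₀, y' x ≤ (t₀ - s) * (A + B) := by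
    calc ∫ x in Ioc s t₀, y' x ≤ ∫ _x in Ioc s t₀, (A + B) :=
          setIntegral_mono_ae_restrict hy'I hKint hbound
      _ = (t₀ - s) * (A + B) := by
          rw [setIntegral_const, Measure.real, Real.volume_Ioc, ENNReal.toReal_ofReal (by linarith), smul_eq_mul]
  have hFTC' := hFTC s t₀ hs0 hst₀
  rw [intervalIntegral.integral_of_le hst₀] at hFTC'
  -- final contradiction
  have hfin : y t₀ ≤ 3/2 * δ + δ * (A + B) := by
    have h1 : y t₀ ≤ y s + (t₀ - s) * (A + B) := by linarith
    have h2 : (t₀ - s) * (A + B) ≤ δ * (A + B) :=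
      mul_le_mul_of_nonneg_right hsδ (by linarith)
    linarith
  have hAB : A + B ≤ M / 3 := by linarith
  have hδM : δ * M = 1 / 2 := by rw [hδdef]; field_simp
  have : y t₀ ≤ 3/2 * (1/6) + 1/6 := by
    have h3 : δ * (A + B) ≤ δ * (M / 3) := mul_le_mul_of_nonneg_left hAB hδpos.le
    have h4 : δ * (M / 3) = 1/6 := by rw [hδdef]; field_simp; ring
    linarith
  linarith
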